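/- For every n ≥ 2, the abelianization of the inverse braid monoid IBₙ (the quotient of IBₙ by the congruence generated by all relations uv = vu) is isomorphic to the commutative monoid defined by the presentation with generators ε, α, α′ and relations αα′ = 1, ε² = ε, and εα = ε (together with commutativity of all generators); i.e., it is the quotient of 𝓔 ⊕ ℤ by the relation ε + 1 = ε, where 𝓔 is the monoid generated by one idempotent generator ε. Under the abelianization map, every εᵢ is sent to ε and every σᵢ is sent to α. -/

import Mathlib

/-!
STATEMENT 19: For every n ≥ 2, the abelianization of the inverse braid
monoid IBₙ (its quotient by the congruence generated by uv = vu) is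
isomorphic to the commutative monoid presented by generators ε, α, α′ with
relations αα′ = 1, ε² = ε, εα = ε, together with commutativity of all
generators (equivalently, the quotient of 𝓔 ⊕ ℤ by ε + 1 = ε).  Under the
abelianization map every εᵢ is sent to ε and every σᵢ to α.
-/
open FreeMonoid

/-- Generators of the inverse braid monoid `IBₙ`: `σᵢ`, `σᵢ⁻¹`
(index `i : Fin (n-1)` stands for subscript `i+1`) and `ε₁, …, εₙ`
(as `eps j`, `j : Fin n`, `j` standing for `ε_{j+1}`). -/
inductive IBGen (n : ℕ) : Type
  | sig (i : Fin (n - 1)) : IBGen n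
  | sinv (i : Fin (n - 1)) : IBGen n
  | eps (j : Fin n) : IBGen n

open IBGen in
/-- The defining relations of the inverse braid monoid `IBₙ`. -/
inductive ibRel (n : ℕ) : FreeMonoid (IBGen n) → FreeMonoid (IBGen n) → Prop
  | braid_comm (i j : Fin (n - 1)) (h : i.val + 1 < j.val ∨ j.val + 1 < i.val) :
      ibRel n (of (sig i) * of (sig j)) (of (sig j) * of (sig i))
  | braid (i j : Fin (n - 1)) (h : j.val = i.val + 1) :
      ibRel n (of (sig i) * of (sig j) * of (sig i))
              (of (sig j) * of (sig i) * of (sig j))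
  | inv_right (i : Fin (n - 1)) : ibRel n (of (sig i) * of (sinv i)) 1
  | inv_left (i : Fin (n - 1)) : ibRel n (of (sinv i) * of (sig i)) 1
  | eps_comm (j : Fin n) (i : Fin (n - 1))
      (h : j.val ≠ i.val ∧ j.val ≠ i.val + 1) :
      ibRel n (of (eps j) * of (sig i)) (of (sig i) * of (eps j))
  | eps_shift₁ (i : Fin (n - 1)) :
      ibRel n (of (eps ⟨i.val, by have := i.isLt; omega⟩) * of (sig i))
              (of (sig i) * of (eps ⟨i.val + 1, by have := i.isLt; omega⟩))
  | eps_shift₂ (i : Fin (n - 1)) :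
      ibRel n (of (eps ⟨i.val + 1, by have := i.isLt; omega⟩) * of (sig i))
              (of (sig i) * of (eps ⟨i.val, by have := i.isLt; omega⟩))
  | idem (j : Fin n) : ibRel n (of (eps j)) (of (eps j) * of (eps j))
  | eps_sq₁ (i : Fin (n - 1)) :
      ibRel n (of (eps ⟨i.val + 1, by have := i.isLt; omega⟩) * of (sig i) * of (sig i))
              (of (eps ⟨i.val + 1, by have := i.isLt; omega⟩))
  | eps_sq₂ (i : Fin (n - 1)) :
      ibRel n (of (sig i) * of (sig i) * of (eps ⟨i.val + 1, by have := i.isLt; omega⟩))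
              (of (eps ⟨i.val + 1, by have := i.isLt; omega⟩))
  | eps_pair₁ (i : Fin (n - 1)) :
      ibRel n (of (eps ⟨i.val, by have := i.isLt; omega⟩) *
               of (eps ⟨i.val + 1, by have := i.isLt; omega⟩) * of (sig i))
              (of (sig i) * of (eps ⟨i.val, by have := i.isLt; omega⟩) *
               of (eps ⟨i.val + 1, by have := i.isLt; omega⟩))
  | eps_pair₂ (i : Fin (n - 1)) :
      ibRel n (of (eps ⟨i.val, by have := i.isLt; omega⟩) *
               of (eps ⟨i.val + 1, by have := i.isLt; omega⟩) * of (sig i))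
              (of (eps ⟨i.val, by have := i.isLt; omega⟩) *
               of (eps ⟨i.val + 1, by have := i.isLt; omega⟩))

/-- The inverse braid monoid `IBₙ`. -/
def InvBraidMonoid (n : ℕ) : Type := PresentedMonoid (ibRel n)

instance (n : ℕ) : Monoid (InvBraidMonoid n) :=
  inferInstanceAs (Monoid (PresentedMonoid (ibRel n)))

/-- The canonical projection from the free monoid to `IBₙ`. -/
def ibWordM (n : ℕ) (w : FreeMonoid (IBGen n)) : InvBraidMonoid n :=
  PresentedMonoid.mk (ibRel n) w

/-- `σ_k` (1-based index) as a word in the free monoid on the generators of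
`IBₙ` (the unit on out-of-range indices). -/
def sgw (n k : ℕ) : FreeMonoid (IBGen n) :=
  if h : 1 ≤ k ∧ k ≤ n - 1 then of (IBGen.sig ⟨k - 1, by omega⟩) else 1

/-- `ε_k` (1-based index) as a word in the free monoid on the generators of
`IBₙ`. -/
def epw (n k : ℕ) : FreeMonoid (IBGen n) :=
  if h : 1 ≤ k ∧ k ≤ n then of (IBGen.eps ⟨k - 1, by omega⟩) else 1

/-- The Garside fundamental word
`Δ = (σ₁⋯σₙ₋₁)(σ₁⋯σₙ₋₂)⋯(σ₁σ₂)σ₁`. -/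
def garsideWord (n : ℕ) : FreeMonoid (IBGen n) :=
  ((List.range (n - 1)).map
    (fun k => ((List.range (n - 1 - k)).map (fun j => sgw n (j + 1))).prod)).prod

/-- The Garside fundamental element `Δ` of `IBₙ`. -/
def garsideM (n : ℕ) : InvBraidMonoid n := ibWordM n (garsideWord n)

/-- The abelianization congruence on `IBₙ`, generated by all relations
`uv = vu`. -/
def abCon (n : ℕ) : Con (InvBraidMonoid n) :=
  conGen (fun x y => ∃ u v : InvBraidMonoid n, x = u * v ∧ y = v * u)

/-- The abelianization of the inverse braid monoid `IBₙ`. -/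
def AbInvBraidMonoid (n : ℕ) : Type := (abCon n).Quotient

instance (n : ℕ) : Monoid (AbInvBraidMonoid n) :=
  inferInstanceAs (Monoid ((abCon n).Quotient))

/-- The canonical abelianization map `IBₙ → Ab(IBₙ)`. -/
def abMap (n : ℕ) (x : InvBraidMonoid n) : AbInvBraidMonoid n :=
  Con.mk' (abCon n) x

/-- The generators ε, α and α′ of the target commutative monoid. -/
inductive AbGen : Type
  | e : AbGen
  | al : AbGen
  | ali : AbGen

open AbGen in
/-- The relations of the target commutative monoid: commutativity of all
generators, `αα′ = 1`, `ε² = ε` and `εα = ε`. -/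
inductive abRel : FreeMonoid AbGen → FreeMonoid AbGen → Prop
  | comm (g h : AbGen) : abRel (of g * of h) (of h * of g)
  | inv : abRel (of al * of ali) 1
  | idem : abRel (of e * of e) (of e)
  | absorb : abRel (of e * of al) (of e)

section Aux

open PresentedMonoid

/-- one-step relation gives equality in the presented monoid -/
lemma pm_rel {β : Type*} {rels : FreeMonoid β → FreeMonoid β → Prop} {a b : FreeMonoid β}
    (h : rels a b) : PresentedMonoid.mk rels a = PresentedMonoid.mk rels b :=
  Quotient.sound (ConGen.Rel.of a b h)

lemma T_comm2 (g h : AbGen) :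
    PresentedMonoid.of abRel g * PresentedMonoid.of abRel h =
      PresentedMonoid.of abRel h * PresentedMonoid.of abRel g := by
  show PresentedMonoid.mk abRel _ * PresentedMonoid.mk abRel _ =
    PresentedMonoid.mk abRel _ * PresentedMonoid.mk abRel _
  rw [← map_mul, ← map_mul]
  exact pm_rel (abRel.comm g h)

lemma T_of_comm (g : AbGen) (x : PresentedMonoid abRel) :
    PresentedMonoid.of abRel g * x = x * PresentedMonoid.of abRel g := by
  induction x using PresentedMonoid.inductionOn with
  | h w =>
    induction w using FreeMonoid.inductionOn' with
    | one => rw [map_one, one_mul, mul_one]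
    | of_mul h c ih =>
      rw [map_mul]
      calc PresentedMonoid.of abRel g *
            (PresentedMonoid.mk abRel (FreeMonoid.of h) * PresentedMonoid.mk abRel c)
          = (PresentedMonoid.of abRel g * PresentedMonoid.of abRel h) *
              PresentedMonoid.mk abRel c := (mul_assoc _ _ _).symm
        _ = (PresentedMonoid.of abRel h * PresentedMonoid.of abRel g) *
              PresentedMonoid.mk abRel c := by rw [T_comm2]
        _ = PresentedMonoid.of abRel h *
              (PresentedMonoid.mk abRel c * PresentedMonoid.of abRel g) := by
              rw [mul_assoc, ih]
        _ = (PresentedMonoid.mk abRel (FreeMonoid.of h) * PresentedMonoid.mk abRel c) *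
              PresentedMonoid.of abRel g := (mul_assoc _ _ _).symm

instance : CommMonoid (PresentedMonoid abRel) :=
  { (inferInstance : Monoid (PresentedMonoid abRel)) with
    mul_comm := fun x y => by
      induction x using PresentedMonoid.inductionOn with
      | h w =>
        induction w using FreeMonoid.inductionOn' with
        | one => rw [map_one, one_mul, mul_one]
        | of_mul g c ih =>
          rw [map_mul]
          calc (PresentedMonoid.mk abRel (FreeMonoid.of g) * PresentedMonoid.mk abRel c) * y
              = PresentedMonoid.of abRel g * (PresentedMonoid.mk abRel c * y) :=
                mul_assoc _ _ _
            _ = PresentedMonoid.of abRel g * (y * PresentedMonoid.mk abRel c) := by rw [ih]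
            _ = (PresentedMonoid.of abRel g * y) * PresentedMonoid.mk abRel c :=
                (mul_assoc _ _ _).symm
            _ = (y * PresentedMonoid.of abRel g) * PresentedMonoid.mk abRel c := by
                rw [T_of_comm]
            _ = y * (PresentedMonoid.mk abRel (FreeMonoid.of g) * PresentedMonoid.mk abRel c) :=
                mul_assoc _ _ _ }

instance abInvBraidComm (n : ℕ) : CommMonoid (AbInvBraidMonoid n) :=
  { (inferInstance : Monoid (AbInvBraidMonoid n)) with
    mul_comm := fun x y => by
      induction x using Con.induction_on with
      | H u => induction y using Con.induction_on with
        | H v =>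
          show ((u * v : InvBraidMonoid n) : (abCon n).Quotient)
            = ((v * u : InvBraidMonoid n) : (abCon n).Quotient)
          exact (Con.eq (abCon n)).mpr (ConGen.Rel.of _ _ ⟨u, v, rfl, rfl⟩) }

lemma braid_cancel {M : Type*} [CommMonoid M] {a b ai bj : M} (ha : a * ai = 1)
    (hb : b * bj = 1) (h : a * b * a = b * a * b) : a = b := by
  have h2 : a * b * a * (ai * bj) = b * a * b * (ai * bj) := by rw [h]
  have l : a * b * a * (ai * bj) = (a * ai) * ((b * bj) * a) := by
    simp only [mul_comm, mul_left_comm, mul_assoc]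
  have r : b * a * b * (ai * bj) = (a * ai) * ((b * bj) * b) := by
    simp only [mul_comm, mul_left_comm, mul_assoc]
  rw [l, r, ha, hb] at h2
  simpa using h2

lemma inv_unique' {M : Type*} [CommMonoid M] {a ai bi : M} (ha : a * ai = 1)
    (hb : a * bi = 1) : ai = bi := by
  calc ai = ai * (a * bi) := by rw [hb, mul_one]
    _ = (a * ai) * bi := by rw [← mul_assoc, mul_comm ai a]
    _ = bi := by rw [ha, one_mul]

end Aux

section Maps

open PresentedMonoid

/-- the composite `FreeMonoid (IBGen n) →* Ab(IBₙ)`. -/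
def Fhom (n : ℕ) : FreeMonoid (IBGen n) →* AbInvBraidMonoid n :=
  (Con.mk' (abCon n)).comp (PresentedMonoid.mk (ibRel n))

lemma ib_ab {n : ℕ} {a b : FreeMonoid (IBGen n)} (h : ibRel n a b) :
    Fhom n a = Fhom n b :=
  congrArg (Con.mk' (abCon n)) (pm_rel h)

def aS (n : ℕ) (i : Fin (n - 1)) : AbInvBraidMonoid n := Fhom n (.of (IBGen.sig i))
def aSi (n : ℕ) (i : Fin (n - 1)) : AbInvBraidMonoid n := Fhom n (.of (IBGen.sinv i))
def aE (n : ℕ) (j : Fin n) : AbInvBraidMonoid n := Fhom n (.of (IBGen.eps j))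

lemma hinv (n : ℕ) (i : Fin (n - 1)) : aS n i * aSi n i = 1 := by
  have h := ib_ab (ibRel.inv_right i)
  simp only [map_mul, map_one] at h
  exact h

lemma eps_succ (n : ℕ) (i : Fin (n - 1)) :
    aE n ⟨i.val + 1, by have := i.isLt; omega⟩ = aE n ⟨i.val, by have := i.isLt; omega⟩ := by
  have h : aE n ⟨i.val, by have := i.isLt; omega⟩ * aS n i
      = aS n i * aE n ⟨i.val + 1, by have := i.isLt; omega⟩ := by
    have h0 := ib_ab (ibRel.eps_shift₁ i)
    simp only [map_mul] at h0
    exact h0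
  calc aE n ⟨i.val + 1, by have := i.isLt; omega⟩
      = aE n ⟨i.val + 1, by have := i.isLt; omega⟩ * (aS n i * aSi n i) := by
        rw [hinv, mul_one]
    _ = (aS n i * aE n ⟨i.val + 1, by have := i.isLt; omega⟩) * aSi n i := by
        rw [← mul_assoc, mul_comm (aE n ⟨i.val + 1, by have := i.isLt; omega⟩) (aS n i)]
    _ = (aE n ⟨i.val, by have := i.isLt; omega⟩ * aS n i) * aSi n i := by rw [h]
    _ = aE n ⟨i.val, by have := i.isLt; omega⟩ * (aS n i * aSi n i) := mul_assoc _ _ _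
    _ = aE n ⟨i.val, by have := i.isLt; omega⟩ := by rw [hinv, mul_one]

lemma sig_succ (n : ℕ) (i j : Fin (n - 1)) (h : j.val = i.val + 1) : aS n i = aS n j := by
  have hb := ib_ab (ibRel.braid i j h)
  simp only [map_mul] at hb
  exact braid_cancel (hinv n i) (hinv n j) hb

lemma aS_eq (n : ℕ) (i : Fin (n - 1)) :
    aS n i = aS n ⟨0, by have := i.isLt; omega⟩ := by
  obtain ⟨k, hk⟩ := i
  induction k with
  | zero => rfl
  | succ m ih =>
      have h1 : aS n ⟨m, by omega⟩ = aS n ⟨m + 1, hk⟩ :=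
        sig_succ n ⟨m, by omega⟩ ⟨m + 1, hk⟩ rfl
      rw [← h1]; exact ih (by omega)

lemma aSi_eq (n : ℕ) (i : Fin (n - 1)) :
    aSi n i = aSi n ⟨0, by have := i.isLt; omega⟩ := by
  refine inv_unique' (a := aS n ⟨0, by have := i.isLt; omega⟩) ?_ ?_
  · rw [← aS_eq n i]; exact hinv n i
  · exact hinv n _

lemma aE_eq (n : ℕ) (j : Fin n) : aE n j = aE n ⟨0, by have := j.isLt; omega⟩ := by
  obtain ⟨k, hk⟩ := j
  induction k with
  | zero => rfl
  | succ m ih =>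
      have h1 : aE n ⟨m + 1, hk⟩ = aE n ⟨m, by omega⟩ :=
        eps_succ n ⟨m, by omega⟩
      rw [h1]; exact ih (by omega)

lemma idem_ab (n : ℕ) (j : Fin n) : aE n j * aE n j = aE n j := by
  have h := ib_ab (ibRel.idem j)
  simp only [map_mul] at h
  exact h.symm

lemma absorb_ab (n : ℕ) (hn : 2 ≤ n) :
    aE n ⟨0, by omega⟩ * aS n ⟨0, by omega⟩ = aE n ⟨0, by omega⟩ := by
  have hp : aE n ⟨0, by omega⟩ * aE n ⟨1, by omega⟩ * aS n ⟨0, by omega⟩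
      = aE n ⟨0, by omega⟩ * aE n ⟨1, by omega⟩ := by
    have h0 := ib_ab (ibRel.eps_pair₂ (⟨0, by omega⟩ : Fin (n - 1)))
    simp only [map_mul] at h0
    exact h0
  have he1 : aE n ⟨1, by omega⟩ = aE n ⟨0, by omega⟩ :=
    eps_succ n (⟨0, by omega⟩ : Fin (n - 1))
  rw [he1, idem_ab] at hp
  exact hp

/-- forward generator map -/
def fwdGen (n : ℕ) : IBGen n → PresentedMonoid abRel
  | .sig _ => PresentedMonoid.of abRel .al
  | .sinv _ => PresentedMonoid.of abRel .ali
  | .eps _ => PresentedMonoid.of abRel .e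

lemma habs : PresentedMonoid.of abRel AbGen.e * PresentedMonoid.of abRel AbGen.al
    = PresentedMonoid.of abRel AbGen.e := by
  show PresentedMonoid.mk abRel _ * PresentedMonoid.mk abRel _ = _
  rw [← map_mul]; exact pm_rel abRel.absorb

lemma hTinv : PresentedMonoid.of abRel AbGen.al * PresentedMonoid.of abRel AbGen.ali
    = 1 := by
  show PresentedMonoid.mk abRel _ * PresentedMonoid.mk abRel _ = 1
  rw [← map_mul]; exact (pm_rel abRel.inv).trans (map_one _)

lemma hidemT : PresentedMonoid.of abRel AbGen.e * PresentedMonoid.of abRel AbGen.e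
    = PresentedMonoid.of abRel AbGen.e := by
  show PresentedMonoid.mk abRel _ * PresentedMonoid.mk abRel _ = _
  rw [← map_mul]; exact pm_rel abRel.idem

lemma fwd_resp (n : ℕ) : ∀ a b : FreeMonoid (IBGen n), ibRel n a b →
    FreeMonoid.lift (fwdGen n) a = FreeMonoid.lift (fwdGen n) b := by
  intro a b h
  cases h with
  | braid_comm i j h =>
      simp only [map_mul, FreeMonoid.lift_eval_of, fwdGen]
  | braid i j h =>
      simp only [map_mul, FreeMonoid.lift_eval_of, fwdGen]
  | inv_right i =>
      simp only [map_mul, map_one, FreeMonoid.lift_eval_of, fwdGen]; exact hTinv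
  | inv_left i =>
      simp only [map_mul, map_one, FreeMonoid.lift_eval_of, fwdGen]
      rw [mul_comm]; exact hTinv
  | eps_comm j i h =>
      simp only [map_mul, FreeMonoid.lift_eval_of, fwdGen]; exact mul_comm _ _
  | eps_shift₁ i =>
      simp only [map_mul, FreeMonoid.lift_eval_of, fwdGen]; exact mul_comm _ _
  | eps_shift₂ i =>
      simp only [map_mul, FreeMonoid.lift_eval_of, fwdGen]; exact mul_comm _ _
  | idem j =>
      simp only [map_mul, FreeMonoid.lift_eval_of, fwdGen]; exact hidemT.symm
  | eps_sq₁ i =>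
      simp only [map_mul, FreeMonoid.lift_eval_of, fwdGen]; rw [habs, habs]
  | eps_sq₂ i =>
      simp only [map_mul, FreeMonoid.lift_eval_of, fwdGen]
      rw [mul_comm, ← mul_assoc, habs, habs]
  | eps_pair₁ i =>
      simp only [map_mul, FreeMonoid.lift_eval_of, fwdGen]
      rw [mul_comm, ← mul_assoc]
  | eps_pair₂ i =>
      simp only [map_mul, FreeMonoid.lift_eval_of, fwdGen]
      rw [mul_assoc, habs]

def fwdP (n : ℕ) : InvBraidMonoid n →* PresentedMonoid abRel :=
  PresentedMonoid.lift (fwdGen n) (fwd_resp n)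

def fwdA (n : ℕ) : AbInvBraidMonoid n →* PresentedMonoid abRel :=
  Con.lift (abCon n) (fwdP n) (Con.conGen_le.mpr (by
    rintro x y ⟨u, v, rfl, rfl⟩
    show Con.ker (fwdP n) (u * v) (v * u)
    rw [Con.ker_rel, map_mul, map_mul, mul_comm]))

def bwdGen (n : ℕ) (hn : 2 ≤ n) : AbGen → AbInvBraidMonoid n
  | .e => aE n ⟨0, by omega⟩
  | .al => aS n ⟨0, by omega⟩
  | .ali => aSi n ⟨0, by omega⟩

lemma bwd_resp (n : ℕ) (hn : 2 ≤ n) : ∀ a b : FreeMonoid AbGen, abRel a b →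
    FreeMonoid.lift (bwdGen n hn) a = FreeMonoid.lift (bwdGen n hn) b := by
  intro a b h
  cases h with
  | comm g h' =>
      simp only [map_mul, FreeMonoid.lift_eval_of]; exact mul_comm _ _
  | inv =>
      simp only [map_mul, map_one, FreeMonoid.lift_eval_of, bwdGen]
      exact hinv n _
  | idem =>
      simp only [map_mul, FreeMonoid.lift_eval_of, bwdGen]
      exact idem_ab n _
  | absorb =>
      simp only [map_mul, FreeMonoid.lift_eval_of, bwdGen]
      exact absorb_ab n hn

def bwdA (n : ℕ) (hn : 2 ≤ n) : PresentedMonoid abRel →* AbInvBraidMonoid n :=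
  PresentedMonoid.lift (bwdGen n hn) (bwd_resp n hn)

lemma left_inv_aux (n : ℕ) (hn : 2 ≤ n) (x : AbInvBraidMonoid n) :
    bwdA n hn (fwdA n x) = x := by
  induction x using Con.induction_on with
  | H y =>
    induction y using PresentedMonoid.inductionOn with
    | h w =>
      show bwdA n hn (fwdA n (Fhom n w)) = Fhom n w
      induction w using FreeMonoid.inductionOn' with
      | one => simp only [map_one]
      | of_mul g c ih =>
        rw [map_mul, map_mul, map_mul, ih]
        congr 1
        cases g with
        | sig i =>
            show bwdA n hn (PresentedMonoid.of abRel AbGen.al) = aS n i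
            exact (aS_eq n i).symm
        | sinv i =>
            show bwdA n hn (PresentedMonoid.of abRel AbGen.ali) = aSi n i
            exact (aSi_eq n i).symm
        | eps j =>
            show bwdA n hn (PresentedMonoid.of abRel AbGen.e) = aE n j
            exact (aE_eq n j).symm

end Maps

theorem abelianization_of_inverse_braid_monoid (n : ℕ) (hn : 2 ≤ n) :
    ∃ e : AbInvBraidMonoid n ≃* PresentedMonoid abRel,
      (∀ j : Fin n,
        e (abMap n (PresentedMonoid.of (ibRel n) (IBGen.eps j))) =
          PresentedMonoid.of abRel AbGen.e) ∧
      (∀ i : Fin (n - 1),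
        e (abMap n (PresentedMonoid.of (ibRel n) (IBGen.sig i))) =
          PresentedMonoid.of abRel AbGen.al) := by
  refine ⟨MonoidHom.toMulEquiv (fwdA n) (bwdA n hn) ?_ ?_, ?_, ?_⟩
  · exact MonoidHom.ext (left_inv_aux n hn)
  · apply PresentedMonoid.ext
    rintro (_|_|_) <;> rfl
  · intro j; rfl
  · intro i; rfl
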